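/- For each integer t ≥ 1, Σ_{x ∈ ℤ} P(x,t) = 1, where P(x,t) := |a(x,t)|². -/

import Mathlib

open scoped BigOperators

noncomputable section

/-- Endpoint `x`-coordinate of a checker path of `n` steps encoded by step directions:
`true` = step `(1,1)`, `false` = step `(-1,1)`. -/
def endpt {n : ℕ} (d : Fin n → Bool) : ℤ :=
  ∑ i, (if d i then (1 : ℤ) else -1)

/-- The number of turns of a checker path encoded by step directions. -/
def turns {n : ℕ} (d : Fin n → Bool) : ℕ :=
  ((Finset.range n).filter fun i =>
    ∃ h : i + 1 < n, d ⟨i, Nat.lt_of_succ_lt h⟩ ≠ d ⟨i + 1, h⟩).card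

/-- Checker paths from `(0,0)` to `(x,n)` with the first step to `(1,1)`,
encoded by their step directions. -/
def pathsTo (x : ℤ) (n : ℕ) : Finset (Fin n → Bool) :=
  Finset.univ.filter fun d => (∃ h : 0 < n, d ⟨0, h⟩ = true) ∧ endpt d = x

/-- Feynman checkers with mass `m` and lattice step `ε`: the value `a(εx, εt, m, ε)`,
where `x t : ℤ` are the coordinates in units of `ε`. -/
def am (x t : ℤ) (m ε : ℝ) : ℂ :=
  (1 + m ^ 2 * ε ^ 2 : ℂ) ^ ((1 - (t : ℂ)) / 2) * Complex.I *
    ∑ d ∈ pathsTo x t.toNat, (-Complex.I * (m * ε)) ^ turns d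

/-- The basic model: `a(x,t)`. -/
def a (x t : ℤ) : ℂ :=
  (2 : ℂ) ^ ((1 - (t : ℂ)) / 2) * Complex.I *
    ∑ d ∈ pathsTo x t.toNat, (-Complex.I) ^ turns d


namespace FC

def lastStep {n : ℕ} (d : Fin n → Bool) : Bool :=
  if h : 0 < n then d ⟨n - 1, Nat.sub_lt h one_pos⟩ else true
lemma lastStep_succ {n : ℕ} (a : Fin (n + 1) → Bool) : lastStep a = a (Fin.last n) := by
  rw [lastStep, dif_pos (Nat.succ_pos n)]; rfl
lemma snoc_mk_lt {n : ℕ} (d : Fin n → Bool) (b : Bool) {i : ℕ} (h : i < n) (h' : i < n + 1) :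
    (Fin.snoc d b : Fin (n + 1) → Bool) ⟨i, h'⟩ = d ⟨i, h⟩ := by
  exact Fin.snoc_castSucc (α := fun _ : Fin (n + 1) => Bool) b d ⟨i, h⟩

lemma turns_snoc {n : ℕ} (hn : 0 < n) (d : Fin n → Bool) (b : Bool) :
    turns (Fin.snoc d b : Fin (n + 1) → Bool) = turns d + (if lastStep d = b then 0 else 1) := by
  obtain ⟨m, rfl⟩ : ∃ m, n = m + 1 := ⟨n - 1, (Nat.succ_pred_eq_of_pos hn).symm⟩
  set D : ℕ → Bool := fun i => if h' : i < m + 1 then d ⟨i, h'⟩ else b with hD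
  have key : ∀ (i : ℕ) (h : i < m + 2), (Fin.snoc d b : Fin (m + 2) → Bool) ⟨i, h⟩ = D i := by
    intro i h
    by_cases h' : i < m + 1
    · simp only [hD]; rw [dif_pos h']; exact snoc_mk_lt d b h' _
    · simp only [hD]; rw [dif_neg h']
      have hi : i = m + 1 := by omega
      subst hi
      exact Fin.snoc_last (α := fun _ : Fin (m + 2) => Bool) b d
  unfold turns
  rw [Finset.card_filter, Finset.card_filter, Finset.sum_range_succ, Finset.sum_range_succ,
    Finset.sum_range_succ]
  simp only [key, lastStep_succ]
  have eC : (if ∃ (_ : m + 1 + 1 < m + 1 + 1), D (m + 1) ≠ D (m + 1 + 1) then 1 else 0) = 0 :=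
    if_neg (fun ⟨h, _⟩ => by omega)
  have eB' : (if ∃ (h : m + 1 < m + 1), d ⟨m, Nat.lt_of_succ_lt h⟩ ≠ d ⟨m + 1, h⟩ then 1 else 0)
      = 0 := if_neg (fun ⟨h, _⟩ => by omega)
  have hDm : D m = d (Fin.last m) := by simp only [hD]; rw [dif_pos (Nat.lt_succ_self m)]; rfl
  have hDm1 : D (m + 1) = b := by simp only [hD]; rw [dif_neg (by omega)]
  have eB : (if ∃ (_ : m + 1 < m + 1 + 1), D m ≠ D (m + 1) then 1 else 0)
      = if d (Fin.last m) = b then 0 else 1 := by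
    rw [hDm, hDm1]
    by_cases hb : d (Fin.last m) = b
    · rw [if_pos hb, if_neg (fun ⟨_, hne⟩ => hne hb)]
    · rw [if_neg hb, if_pos ⟨by omega, hb⟩]
  have eA : (∑ x ∈ Finset.range m,
        if ∃ (h : x + 1 < m + 1), d ⟨x, Nat.lt_of_succ_lt h⟩ ≠ d ⟨x + 1, h⟩ then 1 else 0)
      = ∑ x ∈ Finset.range m, if ∃ (_ : x + 1 < m + 1 + 1), D x ≠ D (x + 1) then 1 else 0 := by
    refine Finset.sum_congr rfl fun x hx => ?_
    have hx' : x < m := Finset.mem_range.mp hx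
    have hDx : D x = d ⟨x, by omega⟩ := by simp only [hD]; exact dif_pos (by omega)
    have hDx1 : D (x + 1) = d ⟨x + 1, by omega⟩ := by simp only [hD]; exact dif_pos (by omega)
    rw [hDx, hDx1]
    congr 1
    rw [eq_iff_iff]
    constructor
    · rintro ⟨h, hne⟩; exact ⟨by omega, hne⟩
    · rintro ⟨h, hne⟩; exact ⟨by omega, hne⟩
  rw [eC, eB', eB, ← eA]
  ring

lemma neg_one_pow_turns : ∀ {n : ℕ} (hn : 0 < n) (d : Fin n → Bool),
    ((-1 : ℤ)) ^ turns d = (if d ⟨0, hn⟩ = lastStep d then 1 else -1) := by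
  intro n
  induction n with
  | zero => intro hn; omega
  | succ m ih =>
    intro hn d
    rcases Nat.eq_zero_or_pos m with hm | hm
    · subst hm
      have ht : turns d = 0 := by
        unfold turns
        apply Finset.card_eq_zero.mpr
        ext i
        simp only [Finset.mem_filter, Finset.mem_range, Finset.notMem_empty, iff_false]
        rintro ⟨hi, h, -⟩
        omega
      have hl : lastStep d = d ⟨0, hn⟩ := by rw [lastStep_succ]; rfl
      rw [ht, hl]
      simp
    · have h1 : turns d = turns (Fin.init d)
          + (if lastStep (Fin.init d) = d (Fin.last m) then 0 else 1) := by
        conv_lhs => rw [← Fin.snoc_init_self d]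
        rw [turns_snoc hm]
      have h2 : lastStep d = d (Fin.last m) := lastStep_succ d
      have h3 : (Fin.init d) ⟨0, hm⟩ = d ⟨0, hn⟩ := rfl
      rw [h1, pow_add, ih hm (Fin.init d), h2, h3]
      cases hb : d ⟨0, hn⟩ <;> cases hc : lastStep (Fin.init d) <;>
        cases he : d (Fin.last m) <;> simp_all


lemma lastStep_snoc {n : ℕ} (d : Fin n → Bool) (b : Bool) :
    lastStep (Fin.snoc d b : Fin (n + 1) → Bool) = b := by
  rw [lastStep_succ]
  exact Fin.snoc_last (α := fun _ : Fin (n + 1) => Bool) b d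

lemma endpt_snoc {n : ℕ} (d : Fin n → Bool) (b : Bool) :
    endpt (Fin.snoc d b) = endpt d + (if b then 1 else -1) := by
  unfold endpt
  rw [Fin.sum_univ_castSucc]
  simp

lemma neg_I_sq : (-Complex.I) ^ 2 = -1 := by
  rw [neg_pow, Complex.I_sq]; ring

lemma neg_one_pow_im_re (j : ℕ) :
    ((-1 : ℂ) ^ j).im = 0 ∧ ((-1 : ℂ) ^ j).re = (-1 : ℝ) ^ j := by
  induction j with
  | zero => simp
  | succ k ih =>
    rw [pow_succ, pow_succ]
    constructor
    · rw [Complex.mul_im, ih.1, ih.2]; simp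
    · rw [Complex.mul_re, ih.1, ih.2]; simp

lemma im_pow_even {k : ℕ} (h : Even k) : ((-Complex.I) ^ k).im = 0 := by
  obtain ⟨j, rfl⟩ := h
  rw [← two_mul, pow_mul, neg_I_sq]
  exact (neg_one_pow_im_re j).1

lemma re_pow_odd {k : ℕ} (h : Odd k) : ((-Complex.I) ^ k).re = 0 := by
  obtain ⟨j, rfl⟩ := h
  rw [pow_add, pow_mul, neg_I_sq, pow_one, Complex.mul_re, (neg_one_pow_im_re j).1]
  simp

lemma even_turns {n : ℕ} (hn : 0 < n) (d : Fin n → Bool) (h0 : d ⟨0, hn⟩ = true)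
    (hl : lastStep d = true) : Even (turns d) := by
  have h := neg_one_pow_turns hn d
  rw [h0, hl, if_pos rfl] at h
  rcases Nat.even_or_odd (turns d) with he | ho
  · exact he
  · rw [Odd.neg_one_pow ho] at h; norm_num at h

lemma odd_turns {n : ℕ} (hn : 0 < n) (d : Fin n → Bool) (h0 : d ⟨0, hn⟩ = true)
    (hl : lastStep d = false) : Odd (turns d) := by
  have h := neg_one_pow_turns hn d
  rw [h0, hl, if_neg (by simp)] at h
  rcases Nat.even_or_odd (turns d) with he | ho
  · rw [Even.neg_one_pow he] at h; norm_num at h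
  · exact ho

lemma mem_pathsTo {x : ℤ} {n : ℕ} {d : Fin n → Bool} :
    d ∈ pathsTo x n ↔ (∃ h : 0 < n, d ⟨0, h⟩ = true) ∧ endpt d = x := by
  simp [pathsTo]

lemma mem_pathsTo_snoc {n : ℕ} (hn : 0 < n) {x : ℤ} (d : Fin n → Bool) (b : Bool) :
    (Fin.snoc d b : Fin (n + 1) → Bool) ∈ pathsTo x (n + 1)
      ↔ d ∈ pathsTo (x - (if b then 1 else -1)) n := by
  rw [mem_pathsTo, mem_pathsTo, endpt_snoc]
  constructor
  · rintro ⟨⟨h0, hfst⟩, hend⟩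
    refine ⟨⟨hn, ?_⟩, eq_sub_of_add_eq hend⟩
    rw [← snoc_mk_lt d b hn (by omega)]
    exact hfst
  · rintro ⟨⟨h0, hfst⟩, hend⟩
    refine ⟨⟨by omega, ?_⟩, by rw [hend]; ring⟩
    rw [snoc_mk_lt d b hn]
    exact hfst

def w (n : ℕ) (b : Bool) (x : ℤ) : ℂ :=
  ∑ d ∈ (pathsTo x n).filter (fun d => lastStep d = b), (-Complex.I) ^ turns d

lemma w_succ {n : ℕ} (hn : 0 < n) (b : Bool) (x : ℤ) :
    w (n + 1) b x = w n b (x - (if b then 1 else -1))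
      + (-Complex.I) * w n (!b) (x - (if b then 1 else -1)) := by
  have step1 : w (n + 1) b x
      = ∑ d ∈ pathsTo (x - (if b then 1 else -1)) n,
          (-Complex.I) ^ turns (Fin.snoc d b : Fin (n + 1) → Bool) := by
    unfold w
    refine Finset.sum_nbij' (i := fun d => Fin.init d)
      (j := fun d => (Fin.snoc d b : Fin (n + 1) → Bool)) ?_ ?_ ?_ ?_ ?_
    · intro a ha
      rw [Finset.mem_filter] at ha
      obtain ⟨hp, hl⟩ := ha
      have hsa : (Fin.snoc (Fin.init a) b : Fin (n + 1) → Bool) = a := by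
        conv_rhs => rw [← Fin.snoc_init_self a]
        congr 1
        rw [← hl, lastStep_succ]
      rw [← hsa] at hp
      exact (mem_pathsTo_snoc hn (Fin.init a) b).mp hp
    · intro a ha
      rw [Finset.mem_filter]
      exact ⟨(mem_pathsTo_snoc hn a b).mpr ha, lastStep_snoc a b⟩
    · intro a ha
      rw [Finset.mem_filter] at ha
      show (Fin.snoc (Fin.init a) b : Fin (n + 1) → Bool) = a
      conv_rhs => rw [← Fin.snoc_init_self a]
      congr 1
      rw [← ha.2, lastStep_succ]
    · intro a ha
      show Fin.init (Fin.snoc a b : Fin (n + 1) → Bool) = a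
      exact Fin.init_snoc (α := fun _ : Fin (n + 1) => Bool) b a
    · intro a ha
      rw [Finset.mem_filter] at ha
      have hsa : (Fin.snoc (Fin.init a) b : Fin (n + 1) → Bool) = a := by
        conv_rhs => rw [← Fin.snoc_init_self a]
        congr 1
        rw [← ha.2, lastStep_succ]
      show (-Complex.I) ^ turns a = (-Complex.I) ^ turns (Fin.snoc (Fin.init a) b : Fin (n + 1) → Bool)
      rw [hsa]
  have step2 : ∀ d ∈ pathsTo (x - (if b then 1 else -1)) n,
      (-Complex.I) ^ turns (Fin.snoc d b : Fin (n + 1) → Bool)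
        = (-Complex.I) ^ turns d * (if lastStep d = b then 1 else -Complex.I) := by
    intro d _
    rw [turns_snoc hn, pow_add]
    by_cases h : lastStep d = b
    · rw [if_pos h, if_pos h, pow_zero]
    · rw [if_neg h, if_neg h, pow_one]
  rw [step1, Finset.sum_congr rfl step2,
    ← Finset.sum_filter_add_sum_filter_not (pathsTo (x - (if b then 1 else -1)) n)
      (fun d => lastStep d = b)]
  congr 1
  · unfold w
    refine Finset.sum_congr rfl fun d hd => ?_
    rw [Finset.mem_filter] at hd
    rw [if_pos hd.2, mul_one]
  · have hset : (pathsTo (x - (if b then 1 else -1)) n).filter (fun d => ¬ lastStep d = b)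
        = (pathsTo (x - (if b then 1 else -1)) n).filter (fun d => lastStep d = !b) := by
      apply Finset.filter_congr
      intro d _
      cases hb : lastStep d <;> cases b <;> simp
    rw [hset]
    unfold w
    rw [Finset.mul_sum]
    refine Finset.sum_congr rfl fun d hd => ?_
    rw [Finset.mem_filter] at hd
    have hne : ¬ lastStep d = b := by
      rw [hd.2]; cases b <;> simp
    rw [if_neg hne, mul_comm]

lemma pathsTo_one (x : ℤ) (d : Fin 1 → Bool) :
    d ∈ pathsTo x 1 ↔ (d = fun _ => true) ∧ x = 1 := by
  rw [mem_pathsTo]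
  constructor
  · rintro ⟨⟨h0, hfst⟩, hend⟩
    have hd : d = fun _ => true := by
      funext i
      have : i = ⟨0, h0⟩ := Subsingleton.elim _ _
      rw [this, hfst]
    subst hd
    refine ⟨rfl, ?_⟩
    unfold endpt at hend
    simpa using hend.symm
  · rintro ⟨rfl, rfl⟩
    refine ⟨⟨one_pos, rfl⟩, ?_⟩
    unfold endpt
    simp

lemma turns_one (d : Fin 1 → Bool) : turns d = 0 := by
  unfold turns
  apply Finset.card_eq_zero.mpr
  ext i
  simp only [Finset.mem_filter, Finset.mem_range, Finset.notMem_empty, iff_false]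
  rintro ⟨hi, h, -⟩
  omega

lemma w_one_true (x : ℤ) : w 1 true x = if x = 1 then 1 else 0 := by
  unfold w
  by_cases hx : x = 1
  · subst hx
    rw [if_pos rfl]
    have hset : (pathsTo (1 : ℤ) 1).filter (fun d => lastStep d = true)
        = {fun _ => true} := by
      ext d
      simp only [Finset.mem_filter, Finset.mem_singleton, pathsTo_one]
      constructor
      · rintro ⟨⟨hd, -⟩, -⟩; exact hd
      · rintro rfl
        refine ⟨⟨rfl, by trivial⟩, by simp [lastStep]⟩
    rw [hset, Finset.sum_singleton, turns_one, pow_zero]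
  · rw [if_neg hx]
    have hset : pathsTo x 1 = ∅ := by
      ext d
      simp only [pathsTo_one, Finset.notMem_empty, iff_false]
      rintro ⟨-, h⟩; exact hx h
    rw [hset, Finset.filter_empty, Finset.sum_empty]

lemma w_one_false (x : ℤ) : w 1 false x = 0 := by
  unfold w
  apply Finset.sum_eq_zero
  intro d hd
  rw [Finset.mem_filter, pathsTo_one] at hd
  obtain ⟨⟨rfl, -⟩, hl⟩ := hd
  simp [lastStep] at hl

lemma abs_endpt_le {n : ℕ} (d : Fin n → Bool) : |endpt d| ≤ n := by
  unfold endpt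
  calc |∑ i, if d i then (1 : ℤ) else -1| ≤ ∑ i : Fin n, |if d i then (1 : ℤ) else -1| :=
        Finset.abs_sum_le_sum_abs _ _
    _ = ∑ _i : Fin n, 1 := Finset.sum_congr rfl (fun i _ => by split <;> simp)
    _ = n := by simp

lemma w_eq_zero {n : ℕ} {x : ℤ} (h : (n : ℤ) < |x|) (b : Bool) : w n b x = 0 := by
  unfold w
  have hset : pathsTo x n = ∅ := by
    ext d
    rw [mem_pathsTo]
    simp only [Finset.notMem_empty, iff_false]
    rintro ⟨-, rfl⟩
    exact absurd (abs_endpt_le d) (not_le.mpr h)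
  rw [hset, Finset.filter_empty, Finset.sum_empty]

lemma w_true_im {n : ℕ} (hn : 0 < n) (x : ℤ) : (w n true x).im = 0 := by
  unfold w
  rw [Complex.im_sum]
  refine Finset.sum_eq_zero fun d hd => ?_
  rw [Finset.mem_filter, mem_pathsTo] at hd
  obtain ⟨⟨⟨h0, hfst⟩, -⟩, hl⟩ := hd
  exact im_pow_even (even_turns hn d hfst hl)

lemma w_false_re {n : ℕ} (hn : 0 < n) (x : ℤ) : (w n false x).re = 0 := by
  unfold w
  rw [Complex.re_sum]
  refine Finset.sum_eq_zero fun d hd => ?_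
  rw [Finset.mem_filter, mem_pathsTo] at hd
  obtain ⟨⟨⟨h0, hfst⟩, -⟩, hl⟩ := hd
  exact re_pow_odd (odd_turns hn d hfst hl)

def u (n : ℕ) (x : ℤ) : ℝ := (w n true x).re

def v (n : ℕ) (x : ℤ) : ℝ := (w n false x).im

lemma u_zero {n : ℕ} {x : ℤ} (h : x ∉ Finset.Icc (-(n : ℤ)) n) : u n x = 0 := by
  have hlt : (n : ℤ) < |x| := by
    rw [Finset.mem_Icc] at h
    push_neg at h
    rcases le_or_gt (-(n : ℤ)) x with h1 | h1
    · exact lt_abs.mpr (Or.inl (h h1))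
    · exact lt_abs.mpr (Or.inr (by omega))
  unfold u
  rw [w_eq_zero hlt, Complex.zero_re]

lemma v_zero {n : ℕ} {x : ℤ} (h : x ∉ Finset.Icc (-(n : ℤ)) n) : v n x = 0 := by
  have hlt : (n : ℤ) < |x| := by
    rw [Finset.mem_Icc] at h
    push_neg at h
    rcases le_or_gt (-(n : ℤ)) x with h1 | h1
    · exact lt_abs.mpr (Or.inl (h h1))
    · exact lt_abs.mpr (Or.inr (by omega))
  unfold v
  rw [w_eq_zero hlt, Complex.zero_im]

lemma u_succ {n : ℕ} (hn : 0 < n) (x : ℤ) :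
    u (n + 1) x = u n (x - 1) + v n (x - 1) := by
  unfold u v
  rw [w_succ hn true x]
  have h : x - (if true then (1 : ℤ) else -1) = x - 1 := by norm_num
  rw [h, Complex.add_re, Complex.mul_re]
  simp only [Complex.neg_re, Complex.neg_im, Complex.I_re, Complex.I_im,
    Bool.not_true, Bool.not_false]
  ring

lemma v_succ {n : ℕ} (hn : 0 < n) (x : ℤ) :
    v (n + 1) x = v n (x + 1) - u n (x + 1) := by
  unfold u v
  rw [w_succ hn false x]
  have h : x - (if false then (1 : ℤ) else -1) = x + 1 := by norm_num
  rw [h, Complex.add_im, Complex.mul_im]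
  simp only [Complex.neg_re, Complex.neg_im, Complex.I_re, Complex.I_im,
    Bool.not_true, Bool.not_false]
  ring

def E (n : ℕ) : ℝ := ∑' x : ℤ, (u n x ^ 2 + v n x ^ 2)

lemma E_one : E 1 = 1 := by
  unfold E
  have h : ∀ x : ℤ, u 1 x ^ 2 + v 1 x ^ 2 = if x = 1 then 1 else 0 := by
    intro x
    unfold u v
    rw [w_one_true, w_one_false]
    by_cases h : x = 1 <;> simp [h]
  rw [tsum_congr h, tsum_ite_eq]

lemma E_succ {n : ℕ} (hn : 0 < n) : E (n + 1) = 2 * E n := by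
  unfold E
  have h1 : ∀ x : ℤ, u (n + 1) x ^ 2 + v (n + 1) x ^ 2
      = (u n (x - 1) + v n (x - 1)) ^ 2 + (v n (x + 1) - u n (x + 1)) ^ 2 := by
    intro x
    rw [u_succ hn, v_succ hn]
  have hzero : ∀ y : ℤ, y ∉ Finset.Icc (-(n : ℤ)) n → u n y + v n y = 0 := by
    intro y hy; rw [u_zero hy, v_zero hy]; ring
  have hzero2 : ∀ y : ℤ, y ∉ Finset.Icc (-(n : ℤ)) n → v n y - u n y = 0 := by
    intro y hy; rw [u_zero hy, v_zero hy]; ring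
  have s1 : Summable (fun x : ℤ => (u n (x - 1) + v n (x - 1)) ^ 2) := by
    apply summable_of_ne_finset_zero (s := Finset.Icc (-(n : ℤ) - 1) ((n : ℤ) + 1))
    intro x hx
    have : x - 1 ∉ Finset.Icc (-(n : ℤ)) n := by
      simp only [Finset.mem_Icc] at hx ⊢; omega
    rw [hzero _ this]; ring
  have s2 : Summable (fun x : ℤ => (v n (x + 1) - u n (x + 1)) ^ 2) := by
    apply summable_of_ne_finset_zero (s := Finset.Icc (-(n : ℤ) - 1) ((n : ℤ) + 1))
    intro x hx
    have : x + 1 ∉ Finset.Icc (-(n : ℤ)) n := by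
      simp only [Finset.mem_Icc] at hx ⊢; omega
    rw [hzero2 _ this]; ring
  have s1' : Summable (fun x : ℤ => (u n x + v n x) ^ 2) := by
    apply summable_of_ne_finset_zero (s := Finset.Icc (-(n : ℤ)) n)
    intro x hx
    rw [hzero _ hx]; ring
  have s2' : Summable (fun x : ℤ => (v n x - u n x) ^ 2) := by
    apply summable_of_ne_finset_zero (s := Finset.Icc (-(n : ℤ)) n)
    intro x hx
    rw [hzero2 _ hx]; ring
  rw [tsum_congr h1, Summable.tsum_add s1 s2]
  have e1 : ∑' x : ℤ, (u n (x - 1) + v n (x - 1)) ^ 2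
      = ∑' x : ℤ, (u n x + v n x) ^ 2 := by
    have := (Equiv.subRight (1 : ℤ)).tsum_eq (f := fun y => (u n y + v n y) ^ 2)
    simp only [Equiv.subRight_apply] at this
    exact this
  have e2 : ∑' x : ℤ, (v n (x + 1) - u n (x + 1)) ^ 2
      = ∑' x : ℤ, (v n x - u n x) ^ 2 := by
    have := (Equiv.addRight (1 : ℤ)).tsum_eq (f := fun y => (v n y - u n y) ^ 2)
    simp only [Equiv.coe_addRight] at this
    exact this
  rw [e1, e2, ← Summable.tsum_add s1' s2', ← tsum_mul_left]
  exact tsum_congr fun x => by ring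

lemma E_val : ∀ n : ℕ, 0 < n → E n = 2 ^ (n - 1) := by
  intro n
  induction n with
  | zero => omega
  | succ m ih =>
    intro _
    rcases Nat.eq_zero_or_pos m with hm | hm
    · subst hm; simpa using E_one
    · rw [E_succ hm, ih hm]
      have h : m + 1 - 1 = (m - 1) + 1 := by omega
      rw [h, pow_succ]
      ring

end FC

/-- Probability/charge conservation for the basic model. -/
theorem probability_conservation_basic (t : ℤ) (ht : 1 ≤ t) :
    ∑' x : ℤ, ‖a x t‖ ^ 2 = 1 := by
  set n := t.toNat with hn
  have hn0 : 0 < n := by omega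
  have hnt : (n : ℤ) = t := Int.toNat_of_nonneg (by omega)
  have habs : ∀ x : ℤ, ‖a x t‖ ^ 2
      = (2 : ℝ) ^ ((1 : ℝ) - t) * (FC.u n x ^ 2 + FC.v n x ^ 2) := by
    intro x
    have hsplit : ∑ d ∈ pathsTo x n, (-Complex.I) ^ turns d
        = FC.w n true x + FC.w n false x := by
      unfold FC.w
      rw [← Finset.sum_filter_add_sum_filter_not (pathsTo x n)
        (fun d => FC.lastStep d = true)]
      congr 1
      apply Finset.sum_congr _ (fun _ _ => rfl)
      apply Finset.filter_congr
      intro d _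
      simp
    have ha : a x t = (2 : ℂ) ^ ((1 - (t : ℂ)) / 2) * Complex.I
        * (FC.w n true x + FC.w n false x) := by
      rw [a, ← hn, hsplit]
    rw [ha, norm_mul, norm_mul, Complex.norm_I, mul_one]
    have hcast : (1 - (t : ℂ)) / 2 = ((((1 : ℝ) - (t : ℝ)) / 2 : ℝ) : ℂ) := by
      push_cast; ring
    have h2 : ((2 : ℂ)) = (((2 : ℝ)) : ℂ) := by norm_num
    rw [hcast, h2, Complex.norm_cpow_eq_rpow_re_of_pos two_pos, Complex.ofReal_re, mul_pow]
    congr 1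
    · rw [← Real.rpow_natCast ((2 : ℝ) ^ (((1 : ℝ) - t) / 2)) 2,
        ← Real.rpow_mul (le_of_lt two_pos)]
      norm_num
    · rw [Complex.sq_norm, Complex.normSq_apply]
      have hre' : (FC.w n true x + FC.w n false x).re = FC.u n x := by
        rw [Complex.add_re, FC.w_false_re hn0, add_zero]; rfl
      have him' : (FC.w n true x + FC.w n false x).im = FC.v n x := by
        rw [Complex.add_im, FC.w_true_im hn0, zero_add]; rfl
      rw [hre', him']
      ring
  rw [tsum_congr habs, tsum_mul_left]
  have hE : ∑' x : ℤ, (FC.u n x ^ 2 + FC.v n x ^ 2) = FC.E n := rfl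
  rw [hE, FC.E_val n hn0,
    ← Real.rpow_natCast 2 (n - 1), ← Real.rpow_add two_pos]
  have hexp : (1 : ℝ) - t + ((n - 1 : ℕ) : ℝ) = 0 := by
    rw [Nat.cast_sub (by omega : 1 ≤ n)]
    have hnr : ((n : ℕ) : ℝ) = (t : ℝ) := by exact_mod_cast congrArg (Int.cast : ℤ → ℝ) hnt
    rw [hnr]
    ring
  rw [hexp, Real.rpow_zero]
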